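/- Let A ∈ M_{m,n}(r,c) be a matrix with ds(A) = ε. Then: (1) if A is column normalized and all R_i(A) are nonsingular (so Row(A) is defined), then cap(Row(A)) ≥ cap(A); (2) if A is row normalized and all C_j(A) are nonsingular (so Col(A) is defined), then cap(Col(A)) ≥ min{ e^{1/6}, e^{ε/6} } · cap(A). -/

import Mathlib

open Matrix BigOperators
open scoped ComplexOrder

noncomputable section

/-- The capacity of a block matrix `A ∈ M_{m,n}(r,c)`. -/
def cap {m n r c : ℕ} (A : Fin m → Fin n → Matrix (Fin r) (Fin c) ℂ) : ℝ :=
  sInf { z : ℝ | ∃ X : Fin m → Matrix (Fin r) (Fin r) ℂ,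
    (∀ i, (X i).PosDef) ∧ (∏ i, (X i).det) = 1 ∧
    z = ∏ j, ((((n : ℂ) * c / ((m : ℂ) * r)) • ∑ i, (A i j)ᴴ * X i * A i j).det).re }

/-- The `i`-th row sum `R_i(A) = Σ_j A_{ij} A_{ij}*`. -/
def RowSum {m n r c : ℕ} (A : Fin m → Fin n → Matrix (Fin r) (Fin c) ℂ) (i : Fin m) :
    Matrix (Fin r) (Fin r) ℂ := ∑ j, A i j * (A i j)ᴴ

/-- The `j`-th column sum `C_j(A) = (nc/mr) Σ_i A_{ij}* A_{ij}`. -/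
def ColSum {m n r c : ℕ} (A : Fin m → Fin n → Matrix (Fin r) (Fin c) ℂ) (j : Fin n) :
    Matrix (Fin c) (Fin c) ℂ := ((n : ℂ) * c / ((m : ℂ) * r)) • ∑ i, (A i j)ᴴ * A i j

/-- `‖M‖₂² = tr (M M*)` for a square complex matrix. -/
def sqNorm {k : ℕ} (M : Matrix (Fin k) (Fin k) ℂ) : ℝ := ((M * Mᴴ).trace).re

/-- Distance of `A` to being doubly stochastic. -/
def dsDist {m n r c : ℕ} (A : Fin m → Fin n → Matrix (Fin r) (Fin c) ℂ) : ℝ :=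
  ∑ j, sqNorm (ColSum A j - 1) + ∑ i, sqNorm (RowSum A i - 1)

/-- `B` is a scaling of `A`: `B_{ij} = R_i A_{ij} C_j` with nonsingular coefficients. -/
def IsScaling {m n r c : ℕ} (A B : Fin m → Fin n → Matrix (Fin r) (Fin c) ℂ) : Prop :=
  ∃ (R : Fin m → Matrix (Fin r) (Fin r) ℂ) (C : Fin n → Matrix (Fin c) (Fin c) ℂ),
    (∀ i, (R i).det ≠ 0) ∧ (∀ j, (C j).det ≠ 0) ∧
    ∀ i j, B i j = R i * A i j * C j

/-- `A` is scalable if it has scalings arbitrarily close to doubly stochastic. -/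
def Scalable {m n r c : ℕ} (A : Fin m → Fin n → Matrix (Fin r) (Fin c) ℂ) : Prop :=
  ∀ ε : ℝ, 0 < ε → ∃ B, IsScaling A B ∧ dsDist B ≤ ε



/-- key scalar inequality -/
lemma scalar_bound (x : ℝ) (hx : 0 ≤ x) :
    x ≤ Real.exp (x - 1 - min 1 ((x - 1) ^ 2) / 6) := by
  rcases hx.eq_or_lt with h | h
  · exact le_of_lt (h ▸ Real.exp_pos _)
  · suffices hgoal : Real.log x ≤ x - 1 - min 1 ((x - 1) ^ 2) / 6 by
      calc x = Real.exp (Real.log x) := (Real.exp_log h).symm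
        _ ≤ _ := Real.exp_le_exp.mpr hgoal
    rcases le_or_gt 2 x with h2 | h2
    · have hmin : min 1 ((x - 1) ^ 2) = 1 := min_eq_left (by nlinarith)
      have hl : Real.log (x / 2) ≤ x / 2 - 1 := Real.log_le_sub_one_of_pos (by linarith)
      rw [Real.log_div (by linarith) (by norm_num)] at hl
      have := Real.log_two_lt_d9
      rw [hmin]; linarith
    · have hmin : min 1 ((x - 1) ^ 2) = (x - 1) ^ 2 := min_eq_right (by nlinarith)
      set s := Real.sqrt x with hs
      have hs0 : 0 < s := Real.sqrt_pos.mpr h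
      have hsq : s ^ 2 = x := Real.sq_sqrt h.le
      have hls : Real.log x = 2 * Real.log s := by
        rw [hs, Real.log_sqrt h.le]; ring
      have hl : Real.log s ≤ s - 1 := Real.log_le_sub_one_of_pos hs0
      have hs2 : s ^ 2 < 2 := by rw [hsq]; exact h2
      have hs32 : s ≤ 17 / 12 := by nlinarith [sq_nonneg (2 * s - 3)]
      have h6 : 0 ≤ 6 - (s + 1) ^ 2 := by nlinarith
      have key : 2 * s - 2 ≤ s ^ 2 - 1 - (s ^ 2 - 1) ^ 2 / 6 := by
        nlinarith [mul_nonneg (sq_nonneg (s - 1)) h6]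
      rw [hmin, hls, ← hsq]; linarith

lemma min_one_sum_le {ι : Type*} [Fintype ι] (f : ι → ℝ) (hf : ∀ i, 0 ≤ f i) :
    min 1 (∑ i, f i) ≤ ∑ i, min 1 (f i) := by
  by_cases h : ∀ i, f i ≤ 1
  · have : ∑ i, min 1 (f i) = ∑ i, f i :=
      Finset.sum_congr rfl fun i _ => min_eq_right (h i)
    rw [this]; exact min_le_right _ _
  · push_neg at h
    obtain ⟨i, hi⟩ := h
    refine le_trans (min_le_left _ _) ?_
    calc (1:ℝ) = min 1 (f i) := (min_eq_left hi.le).symm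
      _ ≤ ∑ j, min 1 (f j) :=
        Finset.single_le_sum (fun j _ => le_min zero_le_one (hf j)) (Finset.mem_univ i)

lemma prod_le_exp_min {ι : Type*} [Fintype ι] (g : ι → ℝ) (hg : ∀ i, 0 ≤ g i)
    (hsum : ∑ i, g i = Fintype.card ι) :
    ∏ i, g i ≤ Real.exp (-(min 1 (∑ i, (g i - 1) ^ 2) / 6)) := by
  calc ∏ i, g i ≤ ∏ i, Real.exp (g i - 1 - min 1 ((g i - 1) ^ 2) / 6) :=
        Finset.prod_le_prod (fun i _ => hg i) (fun i _ => scalar_bound _ (hg i))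
    _ = Real.exp (∑ i, (g i - 1 - min 1 ((g i - 1) ^ 2) / 6)) := by
        rw [Real.exp_sum]
    _ ≤ _ := by
        rw [Real.exp_le_exp]
        have h1 : ∑ i, (g i - 1 - min 1 ((g i - 1) ^ 2) / 6)
            = -((∑ i, min 1 ((g i - 1) ^ 2)) / 6) := by
          rw [Finset.sum_sub_distrib, Finset.sum_sub_distrib, hsum, ← Finset.sum_div]
          simp
        rw [h1, neg_le_neg_iff, div_le_div_iff_of_pos_right (by norm_num)]
        exact min_one_sum_le _ (fun i => sq_nonneg _)

namespace ClaimAux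

lemma psd_sum {k : ℕ} {ι : Type*} (s : Finset ι) (f : ι → Matrix (Fin k) (Fin k) ℂ)
    (hf : ∀ i ∈ s, (f i).PosSemidef) : (∑ i ∈ s, f i).PosSemidef := by
  classical
  induction s using Finset.cons_induction with
  | empty => simpa using Matrix.PosSemidef.zero
  | cons a s ha ih =>
      rw [Finset.sum_cons]
      exact (hf a (Finset.mem_cons_self a s)).add
        (ih fun i hi => hf i (Finset.mem_cons_of_mem hi))

lemma psd_smul {k : ℕ} {M : Matrix (Fin k) (Fin k) ℂ} (hM : M.PosSemidef)
    {z : ℂ} (hz : 0 ≤ z) : (z • M).PosSemidef := by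
  rw [Matrix.posSemidef_iff_dotProduct_mulVec]
  constructor
  · have hzr : star z = z := by
      rw [Complex.nonneg_iff] at hz
      exact Complex.conj_eq_iff_im.mpr hz.2.symm
    show (z • M)ᴴ = z • M
    rw [Matrix.conjTranspose_smul, hzr, hM.1.eq]
  · intro x
    rw [Matrix.smul_mulVec, dotProduct_smul, smul_eq_mul]
    exact mul_nonneg hz ((Matrix.posSemidef_iff_dotProduct_mulVec.mp hM).2 x)

lemma posdef_smul {k : ℕ} {M : Matrix (Fin k) (Fin k) ℂ} (hM : M.PosDef)
    {z : ℂ} (hz : 0 < z) : (z • M).PosDef := by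
  rw [Matrix.posDef_iff_dotProduct_mulVec]
  constructor
  · have hzr : star z = z := by
      rw [Complex.lt_def] at hz
      have : z.im = 0 := by
        have := hz.2; simpa using this.symm
      exact Complex.conj_eq_iff_im.mpr this
    show (z • M)ᴴ = z • M
    rw [Matrix.conjTranspose_smul, hzr, hM.1.eq]
  · intro x hx
    rw [Matrix.smul_mulVec, dotProduct_smul, smul_eq_mul]
    exact mul_pos hz (hM.dotProduct_mulVec_pos hx)

lemma posdef_conj {k : ℕ} {M : Matrix (Fin k) (Fin k) ℂ} {B : Matrix (Fin k) (Fin k) ℂ}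
    (hM : M.PosDef) (hB : B.det ≠ 0) : (Bᴴ * M * B).PosDef := by
  refine Matrix.PosDef.of_dotProduct_mulVec_pos (Matrix.isHermitian_conjTranspose_mul_mul B hM.1) fun x hx => ?_
  have hBx : B *ᵥ x ≠ 0 := by
    intro h
    apply hx
    have h2 := congrArg (fun v => B⁻¹ *ᵥ v) h
    simpa [Matrix.mulVec_mulVec, Matrix.nonsing_inv_mul B (isUnit_iff_ne_zero.mpr hB)] using h2
  simpa only [star_mulVec, dotProduct_mulVec, vecMul_vecMul] using hM.dotProduct_mulVec_pos hBx

lemma det_psd_real {k : ℕ} {M : Matrix (Fin k) (Fin k) ℂ} (hM : M.PosSemidef) :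
    M.det = ((M.det.re : ℝ) : ℂ) ∧ 0 ≤ M.det.re := by
  have h : M.det = ((∏ i, hM.1.eigenvalues i : ℝ) : ℂ) := by
    rw [hM.1.det_eq_prod_eigenvalues, Complex.ofReal_prod]
    exact Finset.prod_congr rfl fun i _ => rfl
  have h0 : 0 ≤ ∏ i, hM.1.eigenvalues i :=
    Finset.prod_nonneg fun i _ => hM.eigenvalues_nonneg i
  have hre : M.det.re = ∏ i, hM.1.eigenvalues i := by rw [h, Complex.ofReal_re]
  exact ⟨by rw [hre, ← h], hre ▸ h0⟩

lemma trace_eq_sum_eigenvalues {k : ℕ} {A : Matrix (Fin k) (Fin k) ℂ} (hA : A.IsHermitian) :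
    A.trace = ((∑ i, hA.eigenvalues i : ℝ) : ℂ) := by
  have hU' : star (hA.eigenvectorUnitary : Matrix (Fin k) (Fin k) ℂ) *
      (hA.eigenvectorUnitary : Matrix (Fin k) (Fin k) ℂ) = 1 :=
    Matrix.mem_unitaryGroup_iff'.mp hA.eigenvectorUnitary.2
  conv_lhs => rw [hA.spectral_theorem, Unitary.conjStarAlgAut_apply]
  rw [Matrix.trace_mul_cycle, hU', Matrix.one_mul, Matrix.trace_diagonal, Complex.ofReal_sum]
  exact Finset.sum_congr rfl fun i _ => rfl

lemma sqNorm_sub_one {k : ℕ} {A : Matrix (Fin k) (Fin k) ℂ} (hA : A.IsHermitian) :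
    sqNorm (A - 1) = ∑ i, (hA.eigenvalues i - 1) ^ 2 := by
  set U : Matrix (Fin k) (Fin k) ℂ := (hA.eigenvectorUnitary : Matrix (Fin k) (Fin k) ℂ) with hUdef
  have hU : U * star U = 1 := Matrix.mem_unitaryGroup_iff.mp hA.eigenvectorUnitary.2
  have hU' : star U * U = 1 := Matrix.mem_unitaryGroup_iff'.mp hA.eigenvectorUnitary.2
  set E : Matrix (Fin k) (Fin k) ℂ := diagonal (fun i => (hA.eigenvalues i : ℂ) - 1) with hE
  have hEdiag : E = diagonal (RCLike.ofReal ∘ hA.eigenvalues) - 1 := by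
    rw [hE, ← Matrix.diagonal_one, Matrix.diagonal_sub]
    rfl
  have hdecomp : A - 1 = U * E * star U := by
    conv_lhs => rw [hA.spectral_theorem, Unitary.conjStarAlgAut_apply]
    rw [hEdiag, Matrix.mul_sub, Matrix.sub_mul, Matrix.mul_one, hU, ← hUdef]
  have hsub : (A - 1).IsHermitian := hA.sub Matrix.isHermitian_one
  have hcancel : ∀ X : Matrix (Fin k) (Fin k) ℂ, star U * (U * X) = X := fun X => by
    rw [← Matrix.mul_assoc, hU', Matrix.one_mul]
  have hprod : (A - 1) * (A - 1)ᴴ = U * (E * (E * star U)) := by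
    rw [hsub.eq, hdecomp]
    simp only [Matrix.mul_assoc]
    rw [hcancel]
  rw [sqNorm, hprod]
  have htr : (U * (E * (E * star U))).trace = (E * E).trace := by
    rw [← Matrix.mul_assoc, Matrix.trace_mul_comm, Matrix.mul_assoc, hcancel]
  rw [htr, hE, Matrix.diagonal_mul_diagonal, Matrix.trace_diagonal]
  rw [Complex.re_sum]
  refine Finset.sum_congr rfl fun i _ => ?_
  have : ((hA.eigenvalues i : ℂ) - 1) * ((hA.eigenvalues i : ℂ) - 1)
      = (((hA.eigenvalues i - 1) ^ 2 : ℝ) : ℂ) := by push_cast; ring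
  rw [this, Complex.ofReal_re]

lemma key_bound {q k : ℕ} (P : Fin q → Matrix (Fin k) (Fin k) ℂ)
    (hP : ∀ j, (P j).PosSemidef)
    (htr : ∑ j, (P j).trace = ((q : ℂ) * k)) :
    ∃ t : ℝ, 0 ≤ t ∧ (∏ j, (P j).det) = (t : ℂ) ∧
      t ≤ Real.exp (-(min 1 (∑ j, sqNorm (P j - 1)) / 6)) := by
  classical
  set g : Fin q × Fin k → ℝ := fun p => (hP p.1).1.eigenvalues p.2 with hg
  have hg0 : ∀ p, 0 ≤ g p := fun p => (hP p.1).eigenvalues_nonneg p.2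
  have h1 : ∑ j, (P j).trace = ((∑ p, g p : ℝ) : ℂ) := by
    rw [Fintype.sum_prod_type, Complex.ofReal_sum]
    refine Finset.sum_congr rfl fun j _ => ?_
    rw [trace_eq_sum_eigenvalues (hP j).1, Complex.ofReal_sum]
  have hsum : ∑ p, g p = Fintype.card (Fin q × Fin k) := by
    have h2 : ((∑ p, g p : ℝ) : ℂ) = ((q : ℂ) * k) := by rw [← h1, htr]
    have h3 : (∑ p, g p : ℝ) = ((q * k : ℕ) : ℝ) := by exact_mod_cast h2
    rw [h3]; simp
  have hdet : (∏ j, (P j).det) = ((∏ p, g p : ℝ) : ℂ) := by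
    rw [Fintype.prod_prod_type, Complex.ofReal_prod]
    refine Finset.prod_congr rfl fun j _ => ?_
    rw [(hP j).1.det_eq_prod_eigenvalues, Complex.ofReal_prod]
    exact Finset.prod_congr rfl fun i _ => rfl
  have hsq : ∑ j, sqNorm (P j - 1) = ∑ p, (g p - 1) ^ 2 := by
    rw [Fintype.sum_prod_type]
    exact Finset.sum_congr rfl fun j _ => sqNorm_sub_one (hP j).1
  refine ⟨∏ p, g p, Finset.prod_nonneg fun p _ => hg0 p, hdet, ?_⟩
  rw [hsq]
  exact prod_le_exp_min g hg0 hsum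

lemma factor_psd {m n r c : ℕ} (A : Fin m → Fin n → Matrix (Fin r) (Fin c) ℂ)
    (X : Fin m → Matrix (Fin r) (Fin r) ℂ) (hX : ∀ i, (X i).PosSemidef) (j : Fin n) :
    ((((n : ℂ) * c / ((m : ℂ) * r)) • ∑ i, (A i j)ᴴ * X i * A i j)).PosSemidef := by
  have hκ : (0:ℂ) ≤ (n : ℂ) * c / ((m : ℂ) * r) := by
    have h : ((n : ℂ) * c / ((m : ℂ) * r)) = ((((n:ℝ)*c/((m:ℝ)*r)) : ℝ) : ℂ) := by push_cast; ring
    rw [h, Complex.zero_le_real]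
    positivity
  exact psd_smul (psd_sum _ _ fun i _ => (hX i).conjTranspose_mul_mul_same (A i j)) hκ

lemma value_nonneg {m n r c : ℕ} (A : Fin m → Fin n → Matrix (Fin r) (Fin c) ℂ)
    (X : Fin m → Matrix (Fin r) (Fin r) ℂ) (hX : ∀ i, (X i).PosSemidef) :
    0 ≤ ∏ j, ((((n : ℂ) * c / ((m : ℂ) * r)) • ∑ i, (A i j)ᴴ * X i * A i j).det).re :=
  Finset.prod_nonneg fun j _ => (det_psd_real (factor_psd A X hX j)).2

lemma part1 {m n r c : ℕ} (hm : 0 < m) (hn : 0 < n) (hr : 0 < r) (hc : 0 < c)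
    (A B : Fin m → Fin n → Matrix (Fin r) (Fin c) ℂ)
    (S : Fin m → Matrix (Fin r) (Fin r) ℂ)
    (hS : ∀ i, (S i).PosDef ∧ S i * S i = RowSum A i)
    (hB : ∀ i j, B i j = (S i)⁻¹ * A i j)
    (hcol : ∀ j, ColSum A j = 1) :
    cap A ≤ cap B := by
  classical
  have hmC : ((m : ℕ) : ℂ) ≠ 0 := Nat.cast_ne_zero.mpr hm.ne'
  have hnC : ((n : ℕ) : ℂ) ≠ 0 := Nat.cast_ne_zero.mpr hn.ne'
  have hrC : ((r : ℕ) : ℂ) ≠ 0 := Nat.cast_ne_zero.mpr hr.ne'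
  have hcC : ((c : ℕ) : ℂ) ≠ 0 := Nat.cast_ne_zero.mpr hc.ne'
  have hκne : ((n : ℂ) * c / ((m : ℂ) * r)) ≠ 0 :=
    div_ne_zero (mul_ne_zero hnC hcC) (mul_ne_zero hmC hrC)
  have hRpsd : ∀ i, (RowSum A i).PosSemidef := fun i => by
    rw [RowSum]
    exact psd_sum _ _ fun j _ => Matrix.posSemidef_self_mul_conjTranspose (A i j)
  -- trace identity from column normalization
  have hTj : ∀ j, ((n : ℂ) * c / ((m : ℂ) * r)) * (∑ i, ((A i j)ᴴ * A i j).trace) = (c : ℂ) := by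
    intro j
    have h := congrArg Matrix.trace (hcol j)
    rw [ColSum] at h
    simpa [Matrix.trace_smul, Matrix.trace_sum, Matrix.trace_one, smul_eq_mul] using h
  have htr1 : ∑ i, (RowSum A i).trace = ((m : ℂ) * r) := by
    have hswap : ∑ i, (RowSum A i).trace = ∑ j, ∑ i, ((A i j)ᴴ * A i j).trace := by
      simp only [RowSum, Matrix.trace_sum]
      rw [Finset.sum_comm]
      exact Finset.sum_congr rfl fun j _ => Finset.sum_congr rfl fun i _ =>
        Matrix.trace_mul_comm (A i j) (A i j)ᴴ
    have hmul : ((n : ℂ) * c / ((m : ℂ) * r)) * (∑ i, (RowSum A i).trace)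
        = ((n : ℂ) * c / ((m : ℂ) * r)) * ((m : ℂ) * r) := by
      rw [hswap, Finset.mul_sum]
      have : ∀ j : Fin n, j ∈ Finset.univ →
          ((n : ℂ) * c / ((m : ℂ) * r)) * (∑ i, ((A i j)ᴴ * A i j).trace) = (c : ℂ) :=
        fun j _ => hTj j
      rw [Finset.sum_congr rfl this, Finset.sum_const, Finset.card_univ, Fintype.card_fin,
        nsmul_eq_mul]
      field_simp
    exact mul_left_cancel₀ hκne hmul
  obtain ⟨t, ht0, htdet, htle⟩ := key_bound (fun i => RowSum A i) hRpsd htr1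
  have hSdet : ∀ i, (S i).det ≠ 0 := fun i => (hS i).1.det_pos.ne'
  have htC : (t : ℂ) ≠ 0 := by
    rw [← htdet]
    refine Finset.prod_ne_zero_iff.mpr fun i _ => ?_
    rw [← (hS i).2, Matrix.det_mul]
    exact mul_ne_zero (hSdet i) (hSdet i)
  have htpos : 0 < t := by
    rcases ht0.eq_or_lt with h | h
    · exact absurd (by rw [← h]; norm_num : (t : ℂ) = 0) htC
    · exact h
  have ht1 : t ≤ 1 := by
    have h0 : 0 ≤ min 1 (∑ i, sqNorm (RowSum A i - 1)) := by
      refine le_min zero_le_one (Finset.sum_nonneg fun i _ => ?_)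
      rw [sqNorm_sub_one (hRpsd i).1]
      exact Finset.sum_nonneg fun p _ => sq_nonneg _
    calc t ≤ Real.exp (-((1 ⊓ ∑ j, sqNorm (RowSum A j - 1)) / 6)) := htle
      _ ≤ Real.exp 0 := Real.exp_le_exp.mpr (by linarith)
      _ = 1 := Real.exp_zero
  -- the scaling factor
  set a : ℝ := t ^ ((1 : ℝ) / ((m * r : ℕ) : ℝ)) with hadef
  have ha0 : 0 < a := Real.rpow_pos_of_pos htpos _
  have ha1 : a ≤ 1 := Real.rpow_le_one ht0 ht1 (by positivity)
  have hapow : a ^ (m * r) = t := by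
    rw [hadef, ← Real.rpow_natCast (t ^ ((1 : ℝ) / ((m * r : ℕ) : ℝ))) (m * r),
      ← Real.rpow_mul ht0, one_div, inv_mul_cancel₀ (by
        exact_mod_cast Nat.cast_ne_zero.mpr (Nat.mul_ne_zero hm.ne' hr.ne')), Real.rpow_one]
  have hSinvH : ∀ i, ((S i)⁻¹)ᴴ = (S i)⁻¹ := fun i => ((hS i).1.1.inv).eq
  have hSinvdet : ∀ i, ((S i)⁻¹).det = ((S i).det)⁻¹ := fun i => by
    simp [Matrix.det_nonsing_inv, Ring.inverse_eq_inv']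
  have haC : (0 : ℂ) < (a : ℂ) := by rw [Complex.zero_lt_real]; exact ha0
  simp only [cap]
  apply le_csInf
  · exact ⟨_, ⟨fun _ => (1 : Matrix (Fin r) (Fin r) ℂ), fun _ => Matrix.PosDef.one, by simp, rfl⟩⟩
  rintro z ⟨X, hX, hXdet, rfl⟩
  set Y : Fin m → Matrix (Fin r) (Fin r) ℂ :=
    fun i => (a : ℂ) • ((S i)⁻¹ * X i * (S i)⁻¹) with hYdef
  have hYpd : ∀ i, (Y i).PosDef := by
    intro i
    refine posdef_smul ?_ haC
    have h := posdef_conj (hX i) (B := (S i)⁻¹) (by rw [hSinvdet i]; exact inv_ne_zero (hSdet i))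
    rwa [hSinvH i] at h
  have hYdet2 : ∏ i, (Y i).det = 1 := by
    have hy : ∀ i, (Y i).det
        = (a : ℂ) ^ r * (((S i).det)⁻¹ * ((X i).det * ((S i).det)⁻¹)) := by
      intro i
      rw [hYdef]
      simp only [Matrix.det_smul, Matrix.det_mul, hSinvdet, Fintype.card_fin]
      ring
    rw [Finset.prod_congr rfl fun i _ => hy i, Finset.prod_mul_distrib,
      Finset.prod_mul_distrib, Finset.prod_mul_distrib, Finset.prod_const,
      Finset.card_univ, Fintype.card_fin, hXdet, Finset.prod_inv_distrib]
    have hprodS : (∏ i, (S i).det) * (∏ i, (S i).det) = (t : ℂ) := by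
      rw [← Finset.prod_mul_distrib, ← htdet]
      exact Finset.prod_congr rfl fun i _ => by rw [← (hS i).2, Matrix.det_mul]
    have hat : ((a : ℂ) ^ r) ^ m = (t : ℂ) := by
      rw [← pow_mul, ← Complex.ofReal_pow, mul_comm r m, hapow]
    rw [hat, one_mul, ← mul_inv, hprodS, mul_inv_cancel₀ htC]
  have hbdd : BddBelow { z : ℝ | ∃ X : Fin m → Matrix (Fin r) (Fin r) ℂ,
      (∀ i, (X i).PosDef) ∧ (∏ i, (X i).det) = 1 ∧
      z = ∏ j, ((((n : ℂ) * c / ((m : ℂ) * r)) • ∑ i, (A i j)ᴴ * X i * A i j).det).re } := by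
    refine ⟨0, fun w hw => ?_⟩
    obtain ⟨X', hX', _, rfl⟩ := hw
    exact value_nonneg A X' fun i => (hX' i).posSemidef
  have hmem := csInf_le hbdd ⟨Y, hYpd, hYdet2, rfl⟩
  refine hmem.trans ?_
  have hval : ∀ j, ((((n : ℂ) * c / ((m : ℂ) * r)) • ∑ i, (A i j)ᴴ * Y i * A i j).det).re
      = a ^ c * ((((n : ℂ) * c / ((m : ℂ) * r)) • ∑ i, (B i j)ᴴ * X i * B i j).det).re := by
    intro j
    have hsum2 : ∑ i, (A i j)ᴴ * Y i * A i j
        = (a : ℂ) • ∑ i, (B i j)ᴴ * X i * B i j := by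
      rw [Finset.smul_sum]
      refine Finset.sum_congr rfl fun i _ => ?_
      rw [hB i j, hYdef]
      simp only [Matrix.conjTranspose_mul, hSinvH i, Matrix.smul_mul, Matrix.mul_smul]
      congr 1
      simp only [Matrix.mul_assoc]
    rw [hsum2, smul_comm, Matrix.det_smul, Fintype.card_fin, ← Complex.ofReal_pow,
      Complex.re_ofReal_mul]
  rw [Finset.prod_congr rfl fun j _ => hval j, Finset.prod_mul_distrib, Finset.prod_const,
    Finset.card_univ, Fintype.card_fin]
  have hz0 : 0 ≤ ∏ j, ((((n : ℂ) * c / ((m : ℂ) * r)) • ∑ i, (B i j)ᴴ * X i * B i j).det).re :=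
    value_nonneg B X fun i => (hX i).posSemidef
  have hpow : (a ^ c) ^ n ≤ 1 :=
    pow_le_one₀ (pow_nonneg ha0.le c) (pow_le_one₀ ha0.le ha1)
  exact mul_le_of_le_one_left hz0 hpow

lemma part2 {m n r c : ℕ} (hm : 0 < m) (hn : 0 < n) (hr : 0 < r) (hc : 0 < c)
    (A B : Fin m → Fin n → Matrix (Fin r) (Fin c) ℂ)
    (S : Fin n → Matrix (Fin c) (Fin c) ℂ) (ε : ℝ)
    (hds : dsDist A = ε)
    (hS : ∀ j, (S j).PosDef ∧ S j * S j = ColSum A j)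
    (hB : ∀ i j, B i j = A i j * (S j)⁻¹)
    (hrow : ∀ i, RowSum A i = 1) :
    min (Real.exp (1 / 6)) (Real.exp (ε / 6)) * cap A ≤ cap B := by
  classical
  have hmC : ((m : ℕ) : ℂ) ≠ 0 := Nat.cast_ne_zero.mpr hm.ne'
  have hnC : ((n : ℕ) : ℂ) ≠ 0 := Nat.cast_ne_zero.mpr hn.ne'
  have hrC : ((r : ℕ) : ℂ) ≠ 0 := Nat.cast_ne_zero.mpr hr.ne'
  have hcC : ((c : ℕ) : ℂ) ≠ 0 := Nat.cast_ne_zero.mpr hc.ne'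
  have hκ0 : (0 : ℂ) ≤ (n : ℂ) * c / ((m : ℂ) * r) := by
    have h : ((n : ℂ) * c / ((m : ℂ) * r)) = ((((n : ℝ) * c / ((m : ℝ) * r)) : ℝ) : ℂ) := by
      push_cast; ring
    rw [h, Complex.zero_le_real]; positivity
  have hCpsd : ∀ j, (ColSum A j).PosSemidef := fun j => by
    rw [ColSum]
    exact psd_smul (psd_sum _ _ fun i _ => Matrix.posSemidef_conjTranspose_mul_self (A i j)) hκ0
  have htr2 : ∑ j, (ColSum A j).trace = ((n : ℂ) * c) := by
    have h1 : ∀ j, (ColSum A j).trace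
        = ((n : ℂ) * c / ((m : ℂ) * r)) * ∑ i, ((A i j)ᴴ * A i j).trace := by
      intro j; rw [ColSum, Matrix.trace_smul, Matrix.trace_sum, smul_eq_mul]
    have h2 : ∀ i, ∑ j, ((A i j)ᴴ * A i j).trace = (r : ℂ) := by
      intro i
      have h3 := congrArg Matrix.trace (hrow i)
      rw [RowSum, Matrix.trace_sum] at h3
      calc ∑ j, ((A i j)ᴴ * A i j).trace = ∑ j, (A i j * (A i j)ᴴ).trace :=
            Finset.sum_congr rfl fun j _ => (Matrix.trace_mul_comm _ _).symm
        _ = (r : ℂ) := by rw [h3, Matrix.trace_one]; simp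
    rw [Finset.sum_congr rfl fun j _ => h1 j, ← Finset.mul_sum, Finset.sum_comm,
      Finset.sum_congr rfl fun i _ => h2 i, Finset.sum_const, Finset.card_univ,
      Fintype.card_fin, nsmul_eq_mul]
    field_simp
  obtain ⟨t, ht0, htdet, htle⟩ := key_bound (fun j => ColSum A j) hCpsd htr2
  have hSdet : ∀ j, (S j).det ≠ 0 := fun j => (hS j).1.det_pos.ne'
  have htC : (t : ℂ) ≠ 0 := by
    rw [← htdet]
    refine Finset.prod_ne_zero_iff.mpr fun j _ => ?_
    rw [← (hS j).2, Matrix.det_mul]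
    exact mul_ne_zero (hSdet j) (hSdet j)
  have htpos : 0 < t := by
    rcases ht0.eq_or_lt with h | h
    · exact absurd (by rw [← h]; norm_num : (t : ℂ) = 0) htC
    · exact h
  have hδ : ∑ j, sqNorm (ColSum A j - 1) = ε := by
    have h0 : ∑ i, sqNorm (RowSum A i - 1) = 0 :=
      Finset.sum_eq_zero fun i _ => by rw [hrow i]; simp [sqNorm]
    rw [dsDist, h0, add_zero] at hds
    exact hds
  have htle' : t ≤ Real.exp (-(min 1 ε / 6)) := by rw [← hδ]; exact htle
  have hSinvH : ∀ j, ((S j)⁻¹)ᴴ = (S j)⁻¹ := fun j => ((hS j).1.1.inv).eq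
  have hSinvdet : ∀ j, ((S j)⁻¹).det = ((S j).det)⁻¹ := fun j => by
    simp [Matrix.det_nonsing_inv, Ring.inverse_eq_inv']
  have hbdd : BddBelow { z : ℝ | ∃ X : Fin m → Matrix (Fin r) (Fin r) ℂ,
      (∀ i, (X i).PosDef) ∧ (∏ i, (X i).det) = 1 ∧
      z = ∏ j, ((((n : ℂ) * c / ((m : ℂ) * r)) • ∑ i, (A i j)ᴴ * X i * A i j).det).re } := by
    refine ⟨0, fun w hw => ?_⟩
    obtain ⟨X', hX', _, rfl⟩ := hw
    exact value_nonneg A X' fun i => (hX' i).posSemidef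
  have hminexp : min (Real.exp (1 / 6)) (Real.exp (ε / 6)) = Real.exp (min 1 ε / 6) := by
    rw [← Real.exp_monotone.map_min, min_div_div_right (by norm_num : (0:ℝ) ≤ 6)]
  conv_rhs => rw [cap]
  apply le_csInf
  · exact ⟨_, ⟨fun _ => (1 : Matrix (Fin r) (Fin r) ℂ), fun _ => Matrix.PosDef.one, by simp, rfl⟩⟩
  rintro z ⟨X, hX, hXdet, rfl⟩
  set w : Fin n → ℝ :=
    fun j => ((((n : ℂ) * c / ((m : ℂ) * r)) • ∑ i, (A i j)ᴴ * X i * A i j).det).re with hw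
  have hwC : ∀ j, (((n : ℂ) * c / ((m : ℂ) * r)) • ∑ i, (A i j)ᴴ * X i * A i j).det
      = ((w j : ℝ) : ℂ) :=
    fun j => (det_psd_real (factor_psd A X (fun i => (hX i).posSemidef) j)).1
  have hw0 : ∀ j, 0 ≤ w j :=
    fun j => (det_psd_real (factor_psd A X (fun i => (hX i).posSemidef) j)).2
  set u : Fin n → ℝ := fun j => ((S j).det).re with hu
  have huC : ∀ j, (S j).det = ((u j : ℝ) : ℂ) := by
    intro j
    have hpos := (hS j).1.det_pos
    rw [Complex.lt_def] at hpos
    apply Complex.ext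
    · simp [hu]
    · simp [hu, ← hpos.2]
  have hu0 : ∀ j, u j ≠ 0 := by
    intro j
    have h := hSdet j
    rw [huC j] at h
    exact_mod_cast h
  have huprod : (∏ j, u j * u j) = t := by
    have h : ((∏ j, u j * u j : ℝ) : ℂ) = (t : ℂ) := by
      rw [Complex.ofReal_prod, ← htdet]
      refine Finset.prod_congr rfl fun j _ => ?_
      rw [← (hS j).2, Matrix.det_mul, huC j]
      push_cast; ring
    exact_mod_cast h
  have hfac : ∀ j, ((((n : ℂ) * c / ((m : ℂ) * r)) • ∑ i, (B i j)ᴴ * X i * B i j).det).re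
      = (u j)⁻¹ * (w j * (u j)⁻¹) := by
    intro j
    have hsum2 : (((n : ℂ) * c / ((m : ℂ) * r)) • ∑ i, (B i j)ᴴ * X i * B i j)
        = (S j)⁻¹ * ((((n : ℂ) * c / ((m : ℂ) * r)) • ∑ i, (A i j)ᴴ * X i * A i j)) * (S j)⁻¹ := by
      rw [Matrix.mul_smul, Matrix.smul_mul]
      congr 1
      rw [Matrix.mul_sum, Matrix.sum_mul]
      refine Finset.sum_congr rfl fun i _ => ?_
      rw [hB i j]
      simp only [Matrix.conjTranspose_mul, hSinvH j]
      simp only [Matrix.mul_assoc]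
    rw [hsum2, Matrix.det_mul, Matrix.det_mul, hSinvdet j, huC j, hwC j]
    have h : (((u j : ℝ) : ℂ))⁻¹ * (((w j : ℝ) : ℂ)) * (((u j : ℝ) : ℂ))⁻¹
        = ((((u j)⁻¹ * (w j * (u j)⁻¹)) : ℝ) : ℂ) := by push_cast; ring
    rw [h, Complex.ofReal_re]
  rw [Finset.prod_congr rfl fun j _ => hfac j]
  have hPP : (∏ j, u j) * (∏ j, u j) = t := by rw [← Finset.prod_mul_distrib]; exact huprod
  have hsplit : ∏ j, ((u j)⁻¹ * (w j * (u j)⁻¹)) = (∏ j, w j) * t⁻¹ := by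
    rw [Finset.prod_mul_distrib, Finset.prod_mul_distrib, Finset.prod_inv_distrib, ← hPP]
    have hP : (∏ j, u j) ≠ 0 := Finset.prod_ne_zero_iff.mpr fun j _ => hu0 j
    field_simp
  have hcaple : cap A ≤ ∏ j, w j := csInf_le hbdd ⟨X, hX, hXdet, by rw [hw]⟩
  have hwprod0 : 0 ≤ ∏ j, w j := Finset.prod_nonneg fun j _ => hw0 j
  calc min (Real.exp (1 / 6)) (Real.exp (ε / 6)) * cap A
      = Real.exp (min 1 ε / 6) * cap A := by rw [hminexp]
    _ ≤ Real.exp (min 1 ε / 6) * (∏ j, w j) :=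
        mul_le_mul_of_nonneg_left hcaple (Real.exp_pos _).le
    _ = (Real.exp (min 1 ε / 6) * t) * ((∏ j, w j) * t⁻¹) := by
        field_simp
    _ ≤ 1 * ((∏ j, w j) * t⁻¹) := by
        refine mul_le_mul_of_nonneg_right ?_
          (mul_nonneg hwprod0 (inv_nonneg.mpr htpos.le))
        have h := mul_le_mul_of_nonneg_left htle' (Real.exp_pos (min 1 ε / 6)).le
        rw [← Real.exp_add] at h
        simpa using h
    _ = (∏ j, w j) * t⁻¹ := one_mul _
    _ = ∏ j, ((u j)⁻¹ * (w j * (u j)⁻¹)) := hsplit.symm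

end ClaimAux


/-- Claim 2.12: capacity does not decrease under row normalization (for a column normalized
matrix), and grows by a quantitative factor under column normalization (for a row normalized
matrix). The inverse square roots `R_i(A)^{-1/2}` and `C_j(A)^{-1/2}` are expressed through
arbitrary positive definite square roots `S i` (such a square root exists and is unique). -/
theorem cap_row_col_normalization {m n r c : ℕ}
    (hm : 0 < m) (hn : 0 < n) (hr : 0 < r) (hc : 0 < c)
    (A : Fin m → Fin n → Matrix (Fin r) (Fin c) ℂ) (ε : ℝ)
    (hds : dsDist A = ε) :
    ((∀ j, ColSum A j = 1) →
      ∀ S : Fin m → Matrix (Fin r) (Fin r) ℂ,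
        (∀ i, (S i).PosDef ∧ S i * S i = RowSum A i) →
        cap A ≤ cap (fun i j => (S i)⁻¹ * A i j)) ∧
    ((∀ i, RowSum A i = 1) →
      ∀ S : Fin n → Matrix (Fin c) (Fin c) ℂ,
        (∀ j, (S j).PosDef ∧ S j * S j = ColSum A j) →
        min (Real.exp (1 / 6)) (Real.exp (ε / 6)) * cap A ≤
          cap (fun i j => A i j * (S j)⁻¹)) := by
  constructor
  · intro hcol S hS
    exact ClaimAux.part1 hm hn hr hc A _ S hS (fun i j => rfl) hcol
  · intro hrow S hS
    exact ClaimAux.part2 hm hn hr hc A _ S ε hds hS (fun i j => rfl) hrow
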